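/- The coefficient of x^N in the polynomial P(n) = Σ_λ (-1)^λ x^{(5λ²-λ)/2} [n choose ⌊(n+5λ)/2⌋] equals the number of partitions of N into parts that differ pairwise by at least 2 and have largest part at most n - 1. -/
import Mathlib

open Polynomial

/-- Gaussian binomial coefficient as a polynomial in `x`
(via the Pascal-type recurrence `[n choose k] = [n-1 choose k-1] + x^k [n-1 choose k]`;
it is zero for `k > n`). -/
noncomputable def gp : ℕ → ℕ → Polynomial ℤ
  | _, 0 => 1
  | 0, _ + 1 => 0
  | n + 1, k + 1 => gp n k + Polynomial.X ^ (k + 1) * gp n (k + 1)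

lemma gp_zero_right (n : ℕ) : gp n 0 = 1 := by cases n <;> rfl

lemma gp_eq_zero : ∀ {n k : ℕ}, n < k → gp n k = 0
  | 0, _ + 1, _ => rfl
  | n + 1, k + 1, h => by
      rw [gp, gp_eq_zero (show n < k by omega), gp_eq_zero (show n < k + 1 by omega)]
      ring

lemma gp_diag : ∀ n : ℕ, gp n n = 1
  | 0 => rfl
  | n + 1 => by rw [gp, gp_diag n, gp_eq_zero (show n < n + 1 by omega)]; ring

/-- column absorption identity -/
lemma gp_absorb : ∀ (n k : ℕ), (1 - Polynomial.X ^ (n - k)) * gp n k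
    = (1 - Polynomial.X ^ (k + 1)) * gp n (k + 1)
  | 0, 0 => by norm_num [gp_zero_right, gp_eq_zero]
  | 0, k + 1 => by rw [gp_eq_zero (by omega), gp_eq_zero (by omega)]; ring
  | n + 1, 0 => by
      have h := gp_absorb n 0
      rw [Nat.sub_zero] at h ⊢
      rw [gp_zero_right] at h ⊢
      rw [show gp (n+1) 1 = gp n 0 + Polynomial.X ^ 1 * gp n 1 from rfl, gp_zero_right]
      linear_combination (Polynomial.X : Polynomial ℤ) * h
  | n + 1, i + 1 => by
      rcases le_or_gt n i with h | h
      · rcases eq_or_lt_of_le h with rfl | h'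
        · rw [Nat.sub_self, pow_zero, sub_self, zero_mul,
            gp_eq_zero (show n + 1 < n + 1 + 1 by omega), mul_zero]
        · rw [gp_eq_zero (show n + 1 < i + 1 by omega),
            gp_eq_zero (show n + 1 < i + 2 by omega)]; ring
      · have h1 := gp_absorb n i
        have h2 := gp_absorb n (i + 1)
        obtain ⟨j, hj1, hj2⟩ : ∃ j, n - i = j + 1 ∧ n - (i + 1) = j := ⟨n - i - 1, by omega, by omega⟩
        rw [show gp (n+1) (i+1) = gp n i + Polynomial.X ^ (i + 1) * gp n (i + 1) from rfl,
            show gp (n+1) (i+2) = gp n (i+1) + Polynomial.X ^ (i + 2) * gp n (i + 2) from rfl,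
            show n + 1 - (i + 1) = j + 1 from by omega]
        rw [hj1] at h1
        rw [hj2] at h2
        linear_combination h1 + Polynomial.X ^ (i + 2) * h2

/-- symmetry -/
lemma gp_symm : ∀ (n k : ℕ), k ≤ n → gp n (n - k) = gp n k
  | _, 0, _ => by rw [Nat.sub_zero, gp_diag, gp_zero_right]
  | 0, k + 1, h => by omega
  | n + 1, k + 1, h => by
      rw [show n + 1 - (k + 1) = n - k from by omega]
      rcases Nat.lt_or_ge (n - k) 1 with h' | h'
      · -- n = k
        have : n = k := by omega
        subst this
        rw [Nat.sub_self, gp_zero_right, gp_diag]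
      · obtain ⟨j, hj⟩ : ∃ j, n - k = j + 1 := ⟨n - k - 1, by omega⟩
        rw [hj, show gp (n+1) (j+1) = gp n j + Polynomial.X ^ (j + 1) * gp n (j + 1) from rfl,
          show gp (n+1) (k+1) = gp n k + Polynomial.X ^ (k + 1) * gp n (k + 1) from rfl]
        have s1 : gp n j = gp n (k + 1) := by
          have := gp_symm n (k + 1) (by omega)
          rwa [show n - (k + 1) = j from by omega] at this
        have s2 : gp n (j + 1) = gp n k := by
          have := gp_symm n k (by omega)
          rwa [show n - k = j + 1 from hj] at this
        rw [s1, s2]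
        have := gp_absorb n k
        rw [hj] at this
        linear_combination -this

/-- second Pascal identity -/
lemma gp_pascal2 (n k : ℕ) (h : k ≤ n) :
    gp (n + 1) (k + 1) = Polynomial.X ^ (n - k) * gp n k + gp n (k + 1) := by
  have hs := gp_symm (n + 1) (k + 1) (by omega)
  rw [show n + 1 - (k + 1) = n - k from by omega] at hs
  rw [← hs]
  rcases Nat.eq_or_lt_of_le h with rfl | h'
  · rw [Nat.sub_self, gp_zero_right, gp_diag, gp_eq_zero (Nat.lt_succ_self _)]
    ring
  · obtain ⟨j, hj⟩ : ∃ j, n - k = j + 1 := ⟨n - k - 1, by omega⟩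
    rw [hj, show gp (n+1) (j+1) = gp n j + Polynomial.X ^ (j + 1) * gp n (j + 1) from rfl]
    have s1 : gp n j = gp n (k + 1) := by
      have := gp_symm n (k + 1) (by omega)
      rwa [show n - (k + 1) = j from by omega] at this
    have s2 : gp n (j + 1) = gp n k := by
      have := gp_symm n k (by omega)
      rwa [hj] at this
    rw [s1, s2]
    ring

/-- Gaussian binomial with integer arguments, zero out of range. -/
noncomputable def gpz (n k : ℤ) : Polynomial ℤ := if 0 ≤ n ∧ 0 ≤ k then gp n.toNat k.toNat else 0

lemma gpz_eq_gp (n k : ℤ) (hn : 0 ≤ n) (hk : 0 ≤ k) : gpz n k = gp n.toNat k.toNat := by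
  rw [gpz, if_pos ⟨hn, hk⟩]

lemma gpz_of_neg (n k : ℤ) (hk : k < 0) : gpz n k = 0 := by
  rw [gpz, if_neg]; omega

lemma gpz_of_gt (n k : ℤ) (hk : n < k) : gpz n k = 0 := by
  rcases le_or_gt 0 k with h | h
  · rcases le_or_gt 0 n with h' | h'
    · rw [gpz_eq_gp _ _ h' h, gp_eq_zero (by omega)]
    · rw [gpz, if_neg]; omega
  · exact gpz_of_neg _ _ h

lemma gpz_pascal1 (n k : ℤ) (hn : 0 ≤ n) :
    gpz (n + 1) k = gpz n (k - 1) + Polynomial.X ^ k.toNat * gpz n k := by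
  rcases lt_trichotomy k 0 with h | rfl | h
  · rw [gpz_of_neg _ _ h, gpz_of_neg _ _ (by omega), gpz_of_neg _ _ h]; ring
  · rw [gpz_eq_gp _ _ (by omega) le_rfl, gpz_of_neg _ _ (by omega), gpz_eq_gp _ _ hn le_rfl]
    simp [gp_zero_right]
  · rw [gpz_eq_gp _ _ (by omega) (by omega), gpz_eq_gp _ _ hn (by omega),
      gpz_eq_gp _ _ hn (by omega),
      show (n + 1).toNat = n.toNat + 1 from by omega,
      show k.toNat = (k - 1).toNat + 1 from by omega]
    rfl

lemma gpz_pascal2 (n k : ℤ) (hn : 0 ≤ n) :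
    gpz (n + 1) k = Polynomial.X ^ (n + 1 - k).toNat * gpz n (k - 1) + gpz n k := by
  rcases lt_trichotomy k 0 with h | rfl | h
  · rw [gpz_of_neg _ _ h, gpz_of_neg _ _ (by omega), gpz_of_neg _ _ h]; ring
  · rw [gpz_eq_gp _ _ (by omega) le_rfl, gpz_of_neg _ _ (by omega), gpz_eq_gp _ _ hn le_rfl]
    simp [gp_zero_right]
  · rcases le_or_gt k (n + 1) with h2 | h2
    · rw [gpz_eq_gp _ _ (by omega) (by omega), gpz_eq_gp _ _ hn (by omega),
        gpz_eq_gp _ _ hn (by omega),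
        show (n + 1).toNat = n.toNat + 1 from by omega,
        show k.toNat = (k - 1).toNat + 1 from by omega]
      have := gp_pascal2 n.toNat (k - 1).toNat (by omega)
      rw [this, show n.toNat - (k - 1).toNat = (n + 1 - k).toNat from by omega]
    · rw [gpz_of_gt _ _ (by omega), gpz_of_gt _ _ (by omega), gpz_of_gt _ _ (by omega)]
      ring

lemma sq_fact (l : ℤ) : ∃ a : ℤ, 5*l^2 - l = 2*a ∧ 0 ≤ a := by
  rcases Int.even_or_odd l with ⟨t, rfl⟩ | ⟨t, rfl⟩
  · refine ⟨10*t^2 - t, by ring, ?_⟩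
    rcases le_or_gt 0 t with h | h
    · nlinarith
    · nlinarith
  · refine ⟨10*t^2 + 9*t + 2, by ring, ?_⟩
    rcases le_or_gt 0 t with h | h
    · nlinarith
    · nlinarith

lemma npw (l : ℤ) : ((-1 : Polynomial ℤ)) ^ (l-1).natAbs = -(-1)^l.natAbs := by
  rcases Int.even_or_odd l with he | ho
  · rw [Even.neg_one_pow (Int.natAbs_even.mpr he),
      Odd.neg_one_pow (Int.natAbs_odd.mpr (he.sub_odd odd_one))]
  · rw [Odd.neg_one_pow (Int.natAbs_odd.mpr ho),
      Even.neg_one_pow (Int.natAbs_even.mpr (ho.sub_odd odd_one)), neg_neg]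

noncomputable def T (n l : ℤ) : Polynomial ℤ :=
  (-1 : Polynomial ℤ) ^ l.natAbs *
    Polynomial.X ^ ((5 * l ^ 2 - l) / 2).toNat * gpz n ((n + 5 * l).fdiv 2)

noncomputable def R (n l : ℤ) : Polynomial ℤ :=
  (-1 : Polynomial ℤ) ^ l.natAbs *
    Polynomial.X ^ ((5 * l ^ 2 + 4 * l + n + 2) / 2).toNat * gpz n ((n + 5 * l) / 2 + 1)

noncomputable def W (n l : ℤ) : Polynomial ℤ := if (n + l) % 2 = 0 then R n l else 0

lemma hfd (x : ℤ) : x.fdiv 2 = x / 2 := Int.fdiv_eq_ediv_of_nonneg x (by norm_num)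

lemma step (n l : ℤ) (hn : 0 ≤ n) :
    T (n+2) l = T (n+1) l + Polynomial.X ^ (n+1).toNat * T n l + (W n l - W n (l-1)) := by
  obtain ⟨a, ha, ha0⟩ := sq_fact l
  unfold T W R
  simp only [hfd]
  rcases Int.even_or_odd (n + l) with hpar | hpar
  · -- even case
    obtain ⟨m, hm⟩ : ∃ m, n + 5*l = 2*m := by
      obtain ⟨t, ht⟩ := hpar; exact ⟨t + 2*l, by omega⟩
    rw [if_pos (by omega), if_neg (by omega)]
    rw [show (n + 2 + 5*l)/2 = m + 1 from by omega, show (n + 1 + 5*l)/2 = m from by omega,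
      show (n + 5*l)/2 = m from by omega]
    rw [show (n:ℤ) + 2 = (n+1)+1 from by ring, gpz_pascal1 (n+1) (m+1) (by omega),
      show (m:ℤ) + 1 - 1 = m from by ring, gpz_pascal2 n (m+1) hn,
      show (m:ℤ) + 1 - 1 = m from by ring, show (n:ℤ) + 1 - (m + 1) = n - m from by ring]
    rcases lt_or_ge m (-1) with hc | hc
    · rw [gpz_of_neg n m (by omega), gpz_of_neg n (m+1) (by omega)]
      ring
    · rcases le_or_gt m n with hc2 | hc2
      · have e1 : ((5*l^2+4*l+n+2)/2).toNat = ((5*l^2-l)/2).toNat + (m+1).toNat := by omega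
        have e2 : (n+1).toNat = (m+1).toNat + (n-m).toNat := by omega
        rw [e1, e2, pow_add, pow_add]
        ring
      · rw [gpz_of_gt n m (by omega), gpz_of_gt n (m+1) (by omega)]
        ring
  · -- odd case
    obtain ⟨m, hm⟩ : ∃ m, n + 5*l = 2*m + 1 := by
      obtain ⟨t, ht⟩ := hpar; exact ⟨t + 2*l, by omega⟩
    rw [if_neg (by omega), if_pos (by omega)]
    rw [show (n + 2 + 5*l)/2 = m + 1 from by omega, show (n + 1 + 5*l)/2 = m + 1 from by omega,
      show (n + 5*l)/2 = m from by omega, show (n + 5*(l-1))/2 = m - 2 from by omega,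
      show (m:ℤ) - 2 + 1 = m - 1 from by ring]
    rw [show (n:ℤ) + 2 = (n+1)+1 from by ring, gpz_pascal2 (n+1) (m+1) (by omega),
      show (m:ℤ) + 1 - 1 = m from by ring, show (n:ℤ) + 1 + 1 - (m+1) = n + 1 - m from by ring,
      gpz_pascal1 n m hn, npw l,
      show 5*(l-1)^2 + 4*(l-1) + n + 2 = 5*l^2 - 6*l + n + 3 from by ring]
    rcases lt_or_ge m 0 with hc | hc
    · rw [gpz_of_neg n m (by omega), gpz_of_neg n (m-1) (by omega)]
      ring
    · rcases le_or_gt m (n+1) with hc2 | hc2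
      · have e1 : ((5*l^2-6*l+n+3)/2).toNat = ((5*l^2-l)/2).toNat + (n+1-m).toNat := by omega
        have e2 : (n+1).toNat = (n+1-m).toNat + m.toNat := by omega
        rw [e1, e2, pow_add, pow_add]
        ring
      · rw [gpz_of_gt n m (by omega), gpz_of_gt n (m-1) (by omega)]
        ring

/-- Schur's polynomial `P(n) = Σ_λ (-1)^λ x^{(5λ²-λ)/2} [n choose ⌊(n+5λ)/2⌋]`. -/
noncomputable def P (n : ℤ) : Polynomial ℤ :=
  ∑ᶠ l : ℤ, (-1 : Polynomial ℤ) ^ l.natAbs *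
    Polynomial.X ^ ((5 * l ^ 2 - l) / 2).toNat * gpz n ((n + 5 * l).fdiv 2)

lemma P_T (n : ℤ) : P n = ∑ᶠ l : ℤ, T n l := rfl

lemma T_vanish (n l : ℤ) (hn : 0 ≤ n) (h : n + 1 < l ∨ l < -(n+1)) : T n l = 0 := by
  unfold T
  rw [hfd]
  rcases h with h | h
  · rw [gpz_of_gt _ _ (by omega), mul_zero]
  · rw [gpz_of_neg _ _ (by omega), mul_zero]

lemma P_sum (n N : ℤ) (hn : 0 ≤ n) (h : n + 1 ≤ N) :
    P n = ∑ l ∈ Finset.Icc (-N) N, T n l := by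
  rw [P_T]
  apply finsum_eq_finset_sum_of_support_subset
  intro l hl
  simp only [Finset.coe_Icc, Set.mem_Icc]
  by_contra hc
  exact hl (T_vanish n l hn (by omega))

lemma tele (f : ℤ → Polynomial ℤ) (a b : ℤ) (h : a ≤ b) :
    ∑ l ∈ Finset.Icc a b, (f l - f (l-1)) = f b - f (a-1) := by
  obtain ⟨k, rfl⟩ : ∃ k : ℕ, b = a + k := ⟨(b - a).toNat, by omega⟩
  clear h
  induction k with
  | zero =>
      rw [show a + ((0:ℕ):ℤ) = a from by push_cast; ring, Finset.Icc_self, Finset.sum_singleton]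
  | succ k ih =>
      have e1 : a + ((k+1 : ℕ):ℤ) = (a + k) + 1 := by push_cast; ring
      have e2 : Finset.Icc a (a + k + 1) = insert (a + (k:ℤ) + 1) (Finset.Icc a (a + k)) := by
        ext x
        simp only [Finset.mem_Icc, Finset.mem_insert]
        omega
      rw [e1, e2, Finset.sum_insert (by simp), ih]
      rw [show a + (k:ℤ) + 1 - 1 = a + k from by ring]
      ring

lemma P_rec (n : ℤ) (hn : 0 ≤ n) : P (n+2) = P (n+1) + Polynomial.X ^ (n+1).toNat * P n := by
  rw [P_sum (n+2) (n+3) (by omega) (by omega), P_sum (n+1) (n+3) (by omega) (by omega), P_sum n (n+3) (by omega) (by omega),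
    Finset.mul_sum]
  have key : ∀ l ∈ Finset.Icc (-(n+3)) (n+3),
      T (n+2) l = T (n+1) l + Polynomial.X ^ (n+1).toNat * T n l + (W n l - W n (l-1)) :=
    fun l _ => step n l hn
  rw [Finset.sum_congr rfl key, Finset.sum_add_distrib, Finset.sum_add_distrib,
    tele (W n) _ _ (by omega)]
  have w1 : W n (n+3) = 0 := by
    rw [W, if_neg (by omega)]
  have w2 : W n (-(n+3) - 1) = 0 := by
    rw [W, if_pos (by omega), R, gpz_of_neg _ _ (by omega), mul_zero]
  rw [w1, w2]
  ring

lemma P_zero : P 0 = 1 := by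
  rw [P_T, finsum_eq_single _ 0]
  · unfold T
    norm_num [hfd, gpz_eq_gp, gp_zero_right]
  · intro l hl
    unfold T
    rw [hfd]
    rcases lt_or_gt_of_ne hl with h | h
    · rw [gpz_of_neg _ _ (by omega), mul_zero]
    · rw [gpz_of_gt _ _ (by omega), mul_zero]

lemma P_one : P 1 = 1 := by
  rw [P_T, finsum_eq_single _ 0]
  · unfold T
    norm_num [hfd, gpz_eq_gp, gp_zero_right]
  · intro l hl
    unfold T
    rw [hfd]
    rcases lt_or_gt_of_ne hl with h | h
    · rw [gpz_of_neg _ _ (by omega), mul_zero]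
    · rw [gpz_of_gt _ _ (by omega), mul_zero]

def K (m : ℕ) : Finset (Finset ℕ) :=
  (Finset.Icc 1 (m-1)).powerset.filter (fun S => ∀ i ∈ S, ∀ j ∈ S, i < j → i + 2 ≤ j)

noncomputable def Q (m : ℕ) : Polynomial ℤ := ∑ S ∈ K m, Polynomial.X ^ (S.sum id)

lemma mem_K {m : ℕ} {S : Finset ℕ} :
    S ∈ K m ↔ (∀ i ∈ S, 1 ≤ i ∧ i ≤ m - 1) ∧ (∀ i ∈ S, ∀ j ∈ S, i < j → i + 2 ≤ j) := by
  simp only [K, Finset.mem_filter, Finset.mem_powerset, Finset.subset_iff, Finset.mem_Icc]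

lemma Q_coeff (m N : ℕ) :
    (Q m).coeff N = (((K m).filter (fun S => S.sum id = N)).card : ℤ) := by
  rw [Q, Polynomial.finset_sum_coeff]
  rw [Finset.sum_congr rfl (fun S _ => Polynomial.coeff_X_pow (S.sum id) N)]
  rw [Finset.sum_boole]
  congr 2
  apply Finset.filter_congr
  intro S _
  simp [eq_comm]

lemma Q_zero : Q 0 = 1 := by
  have : K 0 = {∅} := by decide
  rw [Q, this]
  simp

lemma Q_one : Q 1 = 1 := by
  have : K 1 = {∅} := by decide
  rw [Q, this]
  simp

lemma Q_rec (m : ℕ) : Q (m+2) = Q (m+1) + Polynomial.X ^ (m+1) * Q m := by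
  rw [Q, ← Finset.sum_filter_add_sum_filter_not (K (m+2)) (fun S => (m+1) ∈ S)]
  have h1 : (K (m+2)).filter (fun S => ¬ (m+1) ∈ S) = K (m+1) := by
    ext S
    simp only [Finset.mem_filter, mem_K]
    constructor
    · rintro ⟨⟨hb, hg⟩, hnm⟩
      refine ⟨fun i hi => ?_, hg⟩
      have := hb i hi
      have : i ≠ m + 1 := fun h => hnm (h ▸ hi)
      omega
    · rintro ⟨hb, hg⟩
      refine ⟨⟨fun i hi => by have := hb i hi; omega, hg⟩, fun hm => by have := hb _ hm; omega⟩
  have h2 : ∑ S ∈ (K (m+2)).filter (fun S => (m+1) ∈ S), Polynomial.X ^ (S.sum id)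
      = Polynomial.X ^ (m+1) * Q m := by
    rw [Q, Finset.mul_sum]
    apply Finset.sum_nbij' (fun S => S.erase (m+1)) (fun S => insert (m+1) S)
    · intro S hS
      simp only [Finset.mem_filter, mem_K] at hS
      obtain ⟨⟨hb, hg⟩, hm⟩ := hS
      rw [mem_K]
      constructor
      · intro i hi
        rw [Finset.mem_erase] at hi
        obtain ⟨hne, hiS⟩ := hi
        have h3 := hb i hiS
        rcases lt_trichotomy i (m+1) with h4 | h4 | h4
        · have := hg i hiS (m+1) hm h4
          omega
        · omega
        · omega
      · intro i hi j hj hij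
        rw [Finset.mem_erase] at hi hj
        exact hg i hi.2 j hj.2 hij
    · intro S hS
      rw [mem_K] at hS
      obtain ⟨hb, hg⟩ := hS
      rw [Finset.mem_filter, mem_K]
      refine ⟨⟨fun i hi => ?_, fun i hi j hj hij => ?_⟩, Finset.mem_insert_self _ _⟩
      · rcases Finset.mem_insert.mp hi with rfl | hi'
        · omega
        · have := hb i hi'; omega
      · rcases Finset.mem_insert.mp hi with rfl | hi' <;>
          rcases Finset.mem_insert.mp hj with rfl | hj'
        · omega
        · have := hb j hj'; omega
        · have := hb i hi'; omega
        · exact hg i hi' j hj' hij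
    · intro S hS
      simp only [Finset.mem_filter] at hS
      exact Finset.insert_erase hS.2
    · intro S hS
      rw [mem_K] at hS
      apply Finset.erase_insert
      intro hm
      have := hS.1 _ hm
      omega
    · intro S hS
      simp only [Finset.mem_filter, mem_K] at hS
      obtain ⟨⟨hb, hg⟩, hm⟩ := hS
      have : S.sum id = (m+1) + (S.erase (m+1)).sum id := by
        rw [← Finset.add_sum_erase _ _ hm]
        rfl
      rw [this, pow_add]
  rw [h1, h2, ← Q]
  ring

lemma P_eq_Q (m : ℕ) : P (m : ℤ) = Q m := by
  induction m using Nat.twoStepInduction with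
  | zero => rw [Nat.cast_zero, P_zero, Q_zero]
  | one => rw [Nat.cast_one, P_one, Q_one]
  | more m ih1 ih2 =>
      have hrec := P_rec (m : ℤ) (by positivity)
      have e1 : ((m : ℤ) + 1).toNat = m + 1 := by omega
      rw [e1] at hrec
      have e2 : ((m + 2 : ℕ) : ℤ) = (m : ℤ) + 2 := by push_cast; ring
      have e3 : ((m + 1 : ℕ) : ℤ) = (m : ℤ) + 1 := by push_cast; ring
      rw [e2, hrec, ← e3, ih2, ih1, Q_rec]

/-- The coefficient of `x^N` in `P(n)` counts the partitions of `N` into parts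
differing pairwise by at least 2, with largest part at most `n - 1`. -/
theorem gs1_counts_kangaroo_partitions (n : ℤ) (hn : 0 ≤ n) (N : ℕ) :
    (P n).coeff N =
      (Nat.card {S : Finset ℕ // (∀ i ∈ S, 1 ≤ i ∧ (i : ℤ) ≤ n - 1) ∧
        (∀ i ∈ S, ∀ j ∈ S, i < j → i + 2 ≤ j) ∧ S.sum id = N} : ℤ) := by
  have hc : ((n.toNat : ℕ) : ℤ) = n := Int.toNat_of_nonneg hn
  have h0 := P_eq_Q n.toNat
  rw [hc] at h0
  have hcard : ((K n.toNat).filter (fun S => S.sum id = N)).card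
      = Nat.card {S : Finset ℕ // (∀ i ∈ S, 1 ≤ i ∧ (i : ℤ) ≤ n - 1) ∧
        (∀ i ∈ S, ∀ j ∈ S, i < j → i + 2 ≤ j) ∧ S.sum id = N} := by
    rw [← Nat.card_eq_finsetCard]
    apply Nat.card_congr
    apply Equiv.subtypeEquivRight
    intro S
    simp only [Finset.mem_filter, mem_K]
    constructor
    · rintro ⟨⟨hb, hg⟩, hs⟩
      exact ⟨fun i hi => by have := hb i hi; omega, hg, hs⟩
    · rintro ⟨hb, hg, hs⟩
      exact ⟨⟨fun i hi => by have := hb i hi; omega, hg⟩, hs⟩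
  rw [h0, Q_coeff, hcard]
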